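/- arXiv:1011.3077 — 9 statements merged into one kernel-verified Lean document; each statement's English description precedes it below -/
import Mathlib

section
/- Let A be an n×n Hermitian matrix partitioned in block 2×2 form as A = [[A₁₁, A₂₁ᴴ], [A₂₁, A₂₂]], where A₁₁ and A₂₂ are square diagonal blocks. Then ‖A₂₁‖₂ ≤ (λ_max(A) − λ_min(A))/2, where λ_max(A) and λ_min(A) are the largest and smallest eigenvalues of A. -/
open Matrix

section Aux

lemma quadform_eq_sum {m : Type*} [Fintype m] [DecidableEq m]
    {A : Matrix m m ℂ} (hA : A.IsHermitian) (z : EuclideanSpace ℂ m) :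
    (inner ℂ z (Matrix.toEuclideanLin A z) : ℂ) =
      ∑ i, ((hA.eigenvalues i * ‖hA.eigenvectorBasis.repr z i‖ ^ 2 : ℝ) : ℂ) := by
  set b := hA.eigenvectorBasis with hbdef
  have hb : ∀ i, Matrix.toEuclideanLin A (b i) = (hA.eigenvalues i : ℂ) • b i := by
    intro i
    have h := hA.mulVec_eigenvectorBasis i
    ext j
    have := congrFun h j
    simpa [Matrix.toEuclideanLin_apply, Complex.real_smul] using this
  calc (inner ℂ z (Matrix.toEuclideanLin A z) : ℂ)
      = inner ℂ z (Matrix.toEuclideanLin A (∑ i, b.repr z i • b i)) := by rw [b.sum_repr]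
    _ = ∑ i, b.repr z i * ((hA.eigenvalues i : ℂ) * inner ℂ z (b i)) := by
        rw [map_sum, inner_sum]
        refine Finset.sum_congr rfl fun i _ => ?_
        rw [LinearMap.map_smul, hb, inner_smul_right, inner_smul_right]
    _ = ∑ i, ((hA.eigenvalues i * ‖b.repr z i‖ ^ 2 : ℝ) : ℂ) := by
        refine Finset.sum_congr rfl fun i _ => ?_
        have h1 : (inner ℂ z (b i) : ℂ) = starRingEnd ℂ (b.repr z i) := by
          rw [b.repr_apply_apply, inner_conj_symm]
        rw [h1, show b.repr z i * ((hA.eigenvalues i : ℂ) * starRingEnd ℂ (b.repr z i))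
            = (hA.eigenvalues i : ℂ) * (b.repr z i * starRingEnd ℂ (b.repr z i)) by ring,
          Complex.mul_conj']
        push_cast
        ring

lemma norm_sq_eq_sum {m : Type*} [Fintype m] [DecidableEq m]
    {A : Matrix m m ℂ} (hA : A.IsHermitian) (z : EuclideanSpace ℂ m) :
    ‖z‖ ^ 2 = ∑ i, ‖hA.eigenvectorBasis.repr z i‖ ^ 2 := by
  rw [← hA.eigenvectorBasis.repr.norm_map z, EuclideanSpace.norm_eq,
    Real.sq_sqrt (Finset.sum_nonneg fun i _ => sq_nonneg _)]

lemma rayleigh_le {m : Type*} [Fintype m] [DecidableEq m]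
    {A : Matrix m m ℂ} (hA : A.IsHermitian) (z : EuclideanSpace ℂ m) :
    (inner ℂ z (Matrix.toEuclideanLin A z) : ℂ).re ≤ (⨆ i, hA.eigenvalues i) * ‖z‖ ^ 2 := by
  rw [quadform_eq_sum hA z, norm_sq_eq_sum hA z, Complex.re_sum, Finset.mul_sum]
  refine Finset.sum_le_sum fun i _ => ?_
  rw [Complex.ofReal_re]
  have : hA.eigenvalues i ≤ ⨆ j, hA.eigenvalues j :=
    le_ciSup (Set.Finite.bddAbove (Set.finite_range _)) i
  nlinarith [sq_nonneg ‖hA.eigenvectorBasis.repr z i‖]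

lemma rayleigh_ge {m : Type*} [Fintype m] [DecidableEq m]
    {A : Matrix m m ℂ} (hA : A.IsHermitian) (z : EuclideanSpace ℂ m) :
    (⨅ i, hA.eigenvalues i) * ‖z‖ ^ 2 ≤ (inner ℂ z (Matrix.toEuclideanLin A z) : ℂ).re := by
  rw [quadform_eq_sum hA z, norm_sq_eq_sum hA z, Complex.re_sum, Finset.mul_sum]
  refine Finset.sum_le_sum fun i _ => ?_
  rw [Complex.ofReal_re]
  have : (⨅ j, hA.eigenvalues j) ≤ hA.eigenvalues i :=
    ciInf_le (Set.Finite.bddBelow (Set.finite_range _)) i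
  nlinarith [sq_nonneg ‖hA.eigenvectorBasis.repr z i‖]

variable {n₁ n₂ : ℕ}

noncomputable def emb1 (x : EuclideanSpace ℂ (Fin n₁)) : EuclideanSpace ℂ (Fin n₁ ⊕ Fin n₂) :=
  (WithLp.equiv 2 _).symm (Sum.elim ((WithLp.equiv 2 _) x) 0)

noncomputable def emb2 (y : EuclideanSpace ℂ (Fin n₂)) : EuclideanSpace ℂ (Fin n₁ ⊕ Fin n₂) :=
  (WithLp.equiv 2 _).symm (Sum.elim 0 ((WithLp.equiv 2 _) y))

lemma inner_emb_block (A : Matrix (Fin n₁ ⊕ Fin n₂) (Fin n₁ ⊕ Fin n₂) ℂ)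
    (x : EuclideanSpace ℂ (Fin n₁)) (y : EuclideanSpace ℂ (Fin n₂)) :
    (inner ℂ (emb2 y) (Matrix.toEuclideanLin A (emb1 x)) : ℂ)
      = inner ℂ y (Matrix.toEuclideanLin A.toBlocks₂₁ x) := by
  simp only [PiLp.inner_apply, Matrix.toEuclideanLin_apply, emb1, emb2,
    RCLike.inner_apply, Matrix.mulVec, dotProduct]
  rw [Fintype.sum_sum_type]
  simp only [Fintype.sum_sum_type, Matrix.toBlocks₂₁]
  simp only [Sum.elim_inl, Sum.elim_inr, Pi.zero_apply, map_zero, zero_mul, mul_zero,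
    Finset.sum_const_zero, zero_add, WithLp.equiv_symm_apply, WithLp.equiv_apply, WithLp.ofLp_toLp, Matrix.of_apply]
  refine Finset.sum_congr rfl fun i _ => ?_
  congr 1
  simp [Matrix.mulVec, dotProduct, Fintype.sum_sum_type]

lemma inner_emb_orth (x : EuclideanSpace ℂ (Fin n₁)) (y : EuclideanSpace ℂ (Fin n₂)) :
    (inner ℂ (emb1 x) (emb2 y : EuclideanSpace ℂ (Fin n₁ ⊕ Fin n₂)) : ℂ) = 0 := by
  simp [PiLp.inner_apply, emb1, emb2, Fintype.sum_sum_type]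

lemma norm_emb1 (x : EuclideanSpace ℂ (Fin n₁)) :
    ‖(emb1 x : EuclideanSpace ℂ (Fin n₁ ⊕ Fin n₂))‖ = ‖x‖ := by
  simp [EuclideanSpace.norm_eq, emb1, Fintype.sum_sum_type]

lemma norm_emb2 (y : EuclideanSpace ℂ (Fin n₂)) :
    ‖(emb2 y : EuclideanSpace ℂ (Fin n₁ ⊕ Fin n₂))‖ = ‖y‖ := by
  simp [EuclideanSpace.norm_eq, emb2, Fintype.sum_sum_type]

end Aux

/-- The spectral norm (largest singular value) of a complex matrix: the operator
norm of the induced linear map between Euclidean spaces. -/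
noncomputable def matSpectralNorm {m n : Type*} [Fintype m] [Fintype n] [DecidableEq n]
    (M : Matrix m n ℂ) : ℝ :=
  ‖LinearMap.toContinuousLinearMap (Matrix.toEuclideanLin M)‖

/-- If a Hermitian matrix `A` is partitioned in block 2×2 form with square diagonal
blocks, then the spectral norm of the off-diagonal block `A₂₁` is at most
`(λ_max(A) − λ_min(A))/2`. -/
theorem offdiag_block_norm_le_eigenvalue_spread {n₁ n₂ : ℕ}
    (A : Matrix (Fin n₁ ⊕ Fin n₂) (Fin n₁ ⊕ Fin n₂) ℂ)
    (hA : A.IsHermitian) :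
    matSpectralNorm A.toBlocks₂₁ ≤
      ((⨆ i, hA.eigenvalues i) - (⨅ i, hA.eigenvalues i)) / 2 := by
  set M := ⨆ i, hA.eigenvalues i with hM
  set mm := ⨅ i, hA.eigenvalues i with hmm
  have hRHS : 0 ≤ (M - mm) / 2 := by
    rcases isEmpty_or_nonempty (Fin n₁ ⊕ Fin n₂) with h | h
    · simp [hM, hmm, Real.iSup_of_isEmpty, Real.iInf_of_isEmpty]
    · obtain ⟨i⟩ := h
      have h1 : mm ≤ hA.eigenvalues i := ciInf_le (Set.Finite.bddBelow (Set.finite_range _)) i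
      have h2 : hA.eigenvalues i ≤ M := le_ciSup (Set.Finite.bddAbove (Set.finite_range _)) i
      linarith
  rw [matSpectralNorm]
  refine ContinuousLinearMap.opNorm_le_bound _ hRHS fun u => ?_
  rw [LinearMap.coe_toContinuousLinearMap']
  set w := Matrix.toEuclideanLin A.toBlocks₂₁ u with hwdef
  by_cases hw0 : w = 0
  · rw [hw0, norm_zero]
    exact mul_nonneg hRHS (norm_nonneg u)
  have hu0 : u ≠ 0 := fun h => hw0 (by rw [hwdef, h, map_zero])
  have hwpos : 0 < ‖w‖ := norm_pos_iff.mpr hw0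
  have hupos : 0 < ‖u‖ := norm_pos_iff.mpr hu0
  set T := Matrix.toEuclideanLin A with hT
  have hsymm : LinearMap.IsSymmetric T := Matrix.isHermitian_iff_isSymmetric.mp hA
  set p : EuclideanSpace ℂ (Fin n₁ ⊕ Fin n₂) := emb1 ((‖w‖ : ℂ) • u) with hp
  set q : EuclideanSpace ℂ (Fin n₁ ⊕ Fin n₂) := emb2 ((‖u‖ : ℂ) • w) with hq
  -- key inner product
  have hww : (inner ℂ w w : ℂ).re = ‖w‖ ^ 2 := by
    rw [← RCLike.re_to_complex]; exact inner_self_eq_norm_sq w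
  have hqp : (inner ℂ q (T p) : ℂ).re = ‖u‖ * ‖w‖ * ‖w‖ ^ 2 := by
    rw [hq, hp, hT, inner_emb_block, LinearMap.map_smul, ← hwdef, inner_smul_left,
      inner_smul_right, Complex.conj_ofReal, ← mul_assoc, ← Complex.ofReal_mul,
      Complex.re_ofReal_mul, hww]
  have hpq_re : (inner ℂ p (T q) : ℂ).re = (inner ℂ q (T p) : ℂ).re := by
    have h1 : (inner ℂ p (T q) : ℂ) = starRingEnd ℂ (inner ℂ (T q) p : ℂ) :=
      (inner_conj_symm _ _).symm
    rw [h1, hsymm q p, Complex.conj_re]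
  -- norms of p, q
  have hnp : ‖p‖ = ‖w‖ * ‖u‖ := by
    rw [hp, norm_emb1, norm_smul]
    simp
  have hnq : ‖q‖ = ‖u‖ * ‖w‖ := by
    rw [hq, norm_emb2, norm_smul]
    simp
  have horth : RCLike.re (inner ℂ p q : ℂ) = 0 := by
    rw [RCLike.re_to_complex, hp, hq, inner_emb_orth, Complex.zero_re]
  -- expansions
  have e1 : (inner ℂ (p + q) (T (p + q)) : ℂ)
      = inner ℂ p (T p) + inner ℂ p (T q) + inner ℂ q (T p) + inner ℂ q (T q) := by
    rw [map_add, inner_add_left, inner_add_right, inner_add_right]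
    ring
  have e2 : (inner ℂ (p - q) (T (p - q)) : ℂ)
      = inner ℂ p (T p) - inner ℂ p (T q) - inner ℂ q (T p) + inner ℂ q (T q) := by
    rw [map_sub, inner_sub_left, inner_sub_right, inner_sub_right]
    ring
  have hn1 : ‖p + q‖ ^ 2 = 2 * (‖u‖ * ‖w‖) ^ 2 := by
    rw [@norm_add_sq ℂ _ _ _ _ p q, horth, hnp, hnq]
    ring
  have hn2 : ‖p - q‖ ^ 2 = 2 * (‖u‖ * ‖w‖) ^ 2 := by
    rw [@norm_sub_sq ℂ _ _ _ _ p q, horth, hnp, hnq]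
    ring
  have hup : (inner ℂ (p + q) (T (p + q)) : ℂ).re ≤ M * (2 * (‖u‖ * ‖w‖) ^ 2) := by
    have := rayleigh_le hA (p + q)
    rwa [hn1] at this
  have hdown : mm * (2 * (‖u‖ * ‖w‖) ^ 2) ≤ (inner ℂ (p - q) (T (p - q)) : ℂ).re := by
    have := rayleigh_ge hA (p - q)
    rwa [hn2] at this
  have hre1 : (inner ℂ (p + q) (T (p + q)) : ℂ).re
      = (inner ℂ p (T p) : ℂ).re + 2 * (inner ℂ q (T p) : ℂ).re + (inner ℂ q (T q) : ℂ).re := by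
    rw [e1, Complex.add_re, Complex.add_re, Complex.add_re, hpq_re]
    ring
  have hre2 : (inner ℂ (p - q) (T (p - q)) : ℂ).re
      = (inner ℂ p (T p) : ℂ).re - 2 * (inner ℂ q (T p) : ℂ).re + (inner ℂ q (T q) : ℂ).re := by
    rw [e2, Complex.add_re, Complex.sub_re, Complex.sub_re, hpq_re]
    ring
  rw [hre1, hqp] at hup
  rw [hre2, hqp] at hdown
  have key : 4 * (‖u‖ * ‖w‖ * ‖w‖ ^ 2)
      ≤ M * (2 * (‖u‖ * ‖w‖) ^ 2) - mm * (2 * (‖u‖ * ‖w‖) ^ 2) := by linarith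
  have hpos : (0 : ℝ) < 4 * ‖u‖ * ‖w‖ ^ 2 := by positivity
  refine (mul_le_mul_iff_of_pos_right hpos).mp ?_
  calc ‖w‖ * (4 * ‖u‖ * ‖w‖ ^ 2) = 4 * (‖u‖ * ‖w‖ * ‖w‖ ^ 2) := by ring
    _ ≤ M * (2 * (‖u‖ * ‖w‖) ^ 2) - mm * (2 * (‖u‖ * ‖w‖) ^ 2) := key
    _ = (M - mm) / 2 * ‖u‖ * (4 * ‖u‖ * ‖w‖ ^ 2) := by ring
end

section
/- Let A_j and B_j be invertible n×n complex matrices. Suppose Q is a 2n×2n unitary matrix, partitioned into n×n blocks Q = [[Q₁₁, Q₁₂], [Q₂₁, Q₂₂]], and R_j is an n×n matrix such that the 2n×n block matrix [B_j; −A_j] equals Q·[R_j; 0]. Define A_{j+1} = Q₁₂ᴴ·A_j and B_{j+1} = Q₂₂ᴴ·B_j. If Q₁₂ is invertible, then A_{j+1} is invertible and A_{j+1}⁻¹·B_{j+1} = (A_j⁻¹·B_j)². -/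
open Matrix

/-- Correctness of one step of implicit repeated squaring (IRS): if
`[Bⱼ; −Aⱼ] = Q·[Rⱼ; 0]` with `Q` unitary and `Q₁₂` invertible, then setting
`A_{j+1} = Q₁₂ᴴ·Aⱼ`, `B_{j+1} = Q₂₂ᴴ·Bⱼ`, the matrix `A_{j+1}` is invertible and
`A_{j+1}⁻¹·B_{j+1} = (Aⱼ⁻¹·Bⱼ)²`. -/
theorem irs_one_step {n : ℕ}
    (Aj Bj : Matrix (Fin n) (Fin n) ℂ)
    (hA : IsUnit Aj) (hB : IsUnit Bj)
    (Q : Matrix (Fin n ⊕ Fin n) (Fin n ⊕ Fin n) ℂ)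
    (hQ : Qᴴ * Q = 1)
    (Rj : Matrix (Fin n) (Fin n) ℂ)
    (hQR : Matrix.fromRows Bj (-Aj) = Q * Matrix.fromRows Rj 0)
    (hQ12 : IsUnit Q.toBlocks₁₂) :
    IsUnit ((Q.toBlocks₁₂)ᴴ * Aj) ∧
      ((Q.toBlocks₁₂)ᴴ * Aj)⁻¹ * ((Q.toBlocks₂₂)ᴴ * Bj) = (Aj⁻¹ * Bj) ^ 2 := by
  have hQs : Qᴴ * fromRows Bj (-Aj) = fromRows Rj 0 := by
    rw [hQR]
    exact (Matrix.mul_assoc Qᴴ Q (fromRows Rj 0)).symm.trans (by rw [hQ, Matrix.one_mul])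
  have hQd : Qᴴ = fromBlocks (Q.toBlocks₁₁)ᴴ (Q.toBlocks₂₁)ᴴ (Q.toBlocks₁₂)ᴴ (Q.toBlocks₂₂)ᴴ := by
    rw [← fromBlocks_conjTranspose, fromBlocks_toBlocks]
  rw [hQd, fromBlocks_mul_fromRows, fromRows_ext_iff] at hQs
  have hkey : (Q.toBlocks₂₂)ᴴ * Aj = (Q.toBlocks₁₂)ᴴ * Bj := by
    have h2 := hQs.2
    rw [mul_neg, ← sub_eq_add_neg, sub_eq_zero] at h2
    exact h2.symm
  have hQ12H : IsUnit (Q.toBlocks₁₂)ᴴ := by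
    simpa [← Matrix.star_eq_conjTranspose] using hQ12.star
  have hUnit : IsUnit ((Q.toBlocks₁₂)ᴴ * Aj) := hQ12H.mul hA
  refine ⟨hUnit, ?_⟩
  have hinv : (Q.toBlocks₁₂)ᴴ⁻¹ * (Q.toBlocks₂₂)ᴴ = Bj * Aj⁻¹ := by
    have : (Q.toBlocks₂₂)ᴴ = (Q.toBlocks₁₂)ᴴ * (Bj * Aj⁻¹) := by
      rw [← mul_assoc, ← hkey, mul_assoc, Matrix.mul_nonsing_inv _ (hA.map detMonoidHom),
        mul_one]
    rw [this, ← mul_assoc, Matrix.nonsing_inv_mul _ (hQ12H.map detMonoidHom), one_mul]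
  rw [Matrix.mul_inv_rev, mul_assoc, ← mul_assoc (Q.toBlocks₁₂)ᴴ⁻¹, hinv, sq]
  noncomm_ring
end

section
/- Let A and B be invertible n×n complex matrices. Define sequences by A₀ = A, B₀ = B, and for each j ≥ 0 suppose there is a 2n×2n unitary matrix Q⁽ʲ⁾ with n×n blocks Q₁₁⁽ʲ⁾, Q₁₂⁽ʲ⁾, Q₂₁⁽ʲ⁾, Q₂₂⁽ʲ⁾, where Q₁₂⁽ʲ⁾ is invertible, and an n×n matrix R_j such that [B_j; −A_j] = Q⁽ʲ⁾·[R_j; 0]; set A_{j+1} = (Q₁₂⁽ʲ⁾)ᴴ·A_j and B_{j+1} = (Q₂₂⁽ʲ⁾)ᴴ·B_j. Then for every p ≥ 0, the matrix A_p is invertible and A_p⁻¹·B_p = (A⁻¹·B)^(2^p). -/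
open Matrix

lemma irs_step {n : ℕ}
    (A B : ℕ → Matrix (Fin n) (Fin n) ℂ)
    (Q : ℕ → Matrix (Fin n ⊕ Fin n) (Fin n ⊕ Fin n) ℂ)
    (R : ℕ → Matrix (Fin n) (Fin n) ℂ)
    (hQ : ∀ j, (Q j)ᴴ * Q j = 1)
    (hQ12 : ∀ j, IsUnit ((Q j).toBlocks₁₂))
    (hQR : ∀ j, Matrix.fromRows (B j) (-(A j)) = Q j * Matrix.fromRows (R j) 0)
    (hAstep : ∀ j, A (j + 1) = ((Q j).toBlocks₁₂)ᴴ * A j)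
    (hBstep : ∀ j, B (j + 1) = ((Q j).toBlocks₂₂)ᴴ * B j)
    (j : ℕ) (hAj : IsUnit (A j)) :
    IsUnit (A (j + 1)) ∧ (A (j + 1))⁻¹ * B (j + 1) = ((A j)⁻¹ * B j) ^ 2 := by
  have h12 : IsUnit ((Q j).toBlocks₁₂)ᴴ := (Matrix.isUnit_conjTranspose _).mpr (hQ12 j)
  have hAj' : IsUnit (A (j + 1)) := by rw [hAstep j]; exact h12.mul hAj
  -- key: (Q j)ᴴ * fromRows (B j) (-(A j)) = fromRows (R j) 0
  have hkey : (Q j)ᴴ * Matrix.fromRows (B j) (-(A j)) = Matrix.fromRows (R j) 0 := by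
    rw [hQR j]; exact (Matrix.mul_assoc (Q j)ᴴ (Q j) (Matrix.fromRows (R j) 0)).symm.trans (by rw [hQ j, Matrix.one_mul])
  have hdecomp : (Q j)ᴴ = Matrix.fromBlocks ((Q j).toBlocks₁₁)ᴴ ((Q j).toBlocks₂₁)ᴴ
      ((Q j).toBlocks₁₂)ᴴ ((Q j).toBlocks₂₂)ᴴ := by
    conv_lhs => rw [← Matrix.fromBlocks_toBlocks (Q j)]
    rw [Matrix.fromBlocks_conjTranspose]
  rw [hdecomp, Matrix.fromBlocks_mul_fromRows] at hkey
  have h2 := (Matrix.fromRows_inj hkey).2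
  -- h2 : Q12ᴴ * B j + Q22ᴴ * (-(A j)) = 0
  have hQ22A : ((Q j).toBlocks₂₂)ᴴ * A j = ((Q j).toBlocks₁₂)ᴴ * B j := by
    have := h2
    rw [Matrix.mul_neg] at this
    linear_combination (norm := noncomm_ring) -this
  have hQ22 : ((Q j).toBlocks₂₂)ᴴ = ((Q j).toBlocks₁₂)ᴴ * B j * (A j)⁻¹ := by
    calc ((Q j).toBlocks₂₂)ᴴ = ((Q j).toBlocks₂₂)ᴴ * (A j * (A j)⁻¹) := by
          rw [Matrix.mul_nonsing_inv _ ((Matrix.isUnit_iff_isUnit_det _).mp hAj),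
            Matrix.mul_one]
      _ = ((Q j).toBlocks₁₂)ᴴ * B j * (A j)⁻¹ := by
          rw [← Matrix.mul_assoc, hQ22A]
  refine ⟨hAj', ?_⟩
  rw [hAstep j, hBstep j, hQ22, Matrix.mul_inv_rev]
  simp only [← Matrix.mul_assoc,
    Matrix.nonsing_inv_mul_cancel_right _ _ ((Matrix.isUnit_iff_isUnit_det _).mp h12)]
  rw [pow_two]
  noncomm_ring

/-- Correctness of the implicit repeated squaring (IRS) iteration: starting from
invertible `A 0`, `B 0`, if at each step `[Bⱼ; −Aⱼ] = Q⁽ʲ⁾·[Rⱼ; 0]` with `Q⁽ʲ⁾`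
unitary, its block `Q₁₂⁽ʲ⁾` invertible, and `A_{j+1} = (Q₁₂⁽ʲ⁾)ᴴ·Aⱼ`,
`B_{j+1} = (Q₂₂⁽ʲ⁾)ᴴ·Bⱼ`, then for every `p` the matrix `A p` is invertible and
`(A p)⁻¹·(B p) = ((A 0)⁻¹·(B 0))^(2^p)`. -/
theorem irs_correctness {n : ℕ}
    (A B : ℕ → Matrix (Fin n) (Fin n) ℂ)
    (Q : ℕ → Matrix (Fin n ⊕ Fin n) (Fin n ⊕ Fin n) ℂ)
    (R : ℕ → Matrix (Fin n) (Fin n) ℂ)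
    (hA0 : IsUnit (A 0)) (hB0 : IsUnit (B 0))
    (hQ : ∀ j, (Q j)ᴴ * Q j = 1)
    (hQ12 : ∀ j, IsUnit ((Q j).toBlocks₁₂))
    (hQR : ∀ j, Matrix.fromRows (B j) (-(A j)) = Q j * Matrix.fromRows (R j) 0)
    (hAstep : ∀ j, A (j + 1) = ((Q j).toBlocks₁₂)ᴴ * A j)
    (hBstep : ∀ j, B (j + 1) = ((Q j).toBlocks₂₂)ᴴ * B j) :
    ∀ p : ℕ, IsUnit (A p) ∧ (A p)⁻¹ * B p = ((A 0)⁻¹ * B 0) ^ (2 ^ p) := by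
  intro p
  induction p with
  | zero => exact ⟨hA0, by simp⟩
  | succ p ih =>
    obtain ⟨hU, hEq⟩ := ih
    obtain ⟨hU', hEq'⟩ := irs_step A B Q R hQ hQ12 hQR hAstep hBstep p hU
    refine ⟨hU', ?_⟩
    rw [hEq', hEq, ← pow_mul, pow_succ]
end

section
/- Let C be a diagonalizable n×n complex matrix, C = S·diag(λ₁,…,λ_n)·S⁻¹, with |λ_i| ≠ 1 for all i. Then for every p ≥ 0 the matrix I + C^(2^p) is invertible, and as p → ∞ the matrices (I + C^(2^p))⁻¹ converge to the spectral projector S·D·S⁻¹, where D is the diagonal matrix with D_ii = 1 if |λ_i| < 1 and D_ii = 0 if |λ_i| > 1. -/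
open Matrix Filter

/-- For a diagonalizable matrix `C = S·diag(λ)·S⁻¹` with no eigenvalue of modulus 1,
every matrix `I + C^(2^p)` is invertible and, as `p → ∞`, `(I + C^(2^p))⁻¹`
converges to the spectral projector `S·D·S⁻¹`, where `D` is diagonal with
`D_ii = 1` if `|λᵢ| < 1` and `D_ii = 0` if `|λᵢ| > 1`. -/
theorem repeated_squaring_projector_limit {n : ℕ}
    (C S : Matrix (Fin n) (Fin n) ℂ) (lam : Fin n → ℂ)
    (hS : IsUnit S)
    (hC : C = S * Matrix.diagonal lam * S⁻¹)
    (hlam : ∀ i, ‖lam i‖ ≠ 1) :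
    (∀ p : ℕ, IsUnit (1 + C ^ (2 ^ p))) ∧
      Tendsto (fun p : ℕ => (1 + C ^ (2 ^ p))⁻¹) atTop
        (nhds (S * Matrix.diagonal
          (fun i => if ‖lam i‖ < 1 then (1 : ℂ) else 0) * S⁻¹)) := by
  have hdet := (Matrix.isUnit_iff_isUnit_det S).mp hS
  have h1 : S⁻¹ * S = 1 := Matrix.nonsing_inv_mul S hdet
  have h2 : S * S⁻¹ = 1 := Matrix.mul_nonsing_inv S hdet
  -- nonvanishing of 1 + lam i ^ 2^p
  have hne : ∀ (p : ℕ) (i : Fin n), (1 : ℂ) + lam i ^ (2 ^ p) ≠ 0 := by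
    intro p i h
    have h' : lam i ^ (2 ^ p) = -1 := by linear_combination h
    have habs := congrArg (‖·‖) h'
    rw [norm_pow, norm_neg, norm_one] at habs
    rcases (hlam i).lt_or_gt with hlt | hgt
    · have : ‖lam i‖ ^ (2 ^ p) < 1 :=
        pow_lt_one₀ (norm_nonneg _) hlt (by positivity)
      simp_all
    · have : 1 < ‖lam i‖ ^ (2 ^ p) := one_lt_pow₀ hgt (by positivity)
      simp_all
  -- key identity
  have key : ∀ p : ℕ, 1 + C ^ (2 ^ p) =
      S * Matrix.diagonal (fun i => 1 + lam i ^ (2 ^ p)) * S⁻¹ := by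
    intro p
    have hpow : (S * Matrix.diagonal lam * S⁻¹) ^ (2 ^ p)
        = S * (Matrix.diagonal lam) ^ (2 ^ p) * S⁻¹ := by
      induction (2 ^ p) with
      | zero => simp [h2]
      | succ k ih =>
        rw [pow_succ, pow_succ, ih]
        simp only [mul_assoc]
        rw [← mul_assoc S⁻¹ S, h1, one_mul]
    rw [hC, hpow, Matrix.diagonal_pow,
      show (Matrix.diagonal fun i => 1 + lam i ^ (2 ^ p))
          = 1 + Matrix.diagonal (lam ^ (2 ^ p)) from by
        rw [← Matrix.diagonal_one, ← Matrix.diagonal_add]; rfl,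
      Matrix.mul_add, Matrix.add_mul, mul_one, h2]
  have hunit : ∀ p : ℕ, IsUnit (1 + C ^ (2 ^ p)) := by
    intro p
    rw [key p]
    have hu : IsUnit (fun i => 1 + lam i ^ (2 ^ p) : Fin n → ℂ) := by
      refine ⟨⟨_, fun i => (1 + lam i ^ (2 ^ p))⁻¹, ?_, ?_⟩, rfl⟩ <;> funext i
      · exact mul_inv_cancel₀ (hne p i)
      · exact inv_mul_cancel₀ (hne p i)
    exact (hS.mul (Matrix.isUnit_diagonal.mpr hu)).mul
      (Matrix.isUnit_nonsing_inv_iff.mpr hS)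
  refine ⟨hunit, ?_⟩
  -- inverse formula
  have hinv : ∀ p : ℕ, (1 + C ^ (2 ^ p))⁻¹
      = S * Matrix.diagonal (fun i => (1 + lam i ^ (2 ^ p))⁻¹) * S⁻¹ := by
    intro p
    apply Matrix.inv_eq_right_inv
    rw [key p]
    calc S * Matrix.diagonal (fun i => 1 + lam i ^ (2 ^ p)) * S⁻¹ *
          (S * Matrix.diagonal (fun i => (1 + lam i ^ (2 ^ p))⁻¹) * S⁻¹)
        = S * (Matrix.diagonal (fun i => 1 + lam i ^ (2 ^ p)) *
            Matrix.diagonal (fun i => (1 + lam i ^ (2 ^ p))⁻¹)) * S⁻¹ := by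
          simp only [Matrix.mul_assoc]
          rw [← Matrix.mul_assoc S⁻¹ S, h1, Matrix.one_mul]
      _ = 1 := by
          rw [Matrix.diagonal_mul_diagonal]
          rw [show (fun i => (1 + lam i ^ (2 ^ p)) * (1 + lam i ^ (2 ^ p))⁻¹)
              = fun _ => (1 : ℂ) from funext fun i => mul_inv_cancel₀ (hne p i)]
          rw [Matrix.diagonal_one, mul_one, h2]
  -- scalar limits
  have scal : ∀ i, Tendsto (fun p : ℕ => (1 + lam i ^ (2 ^ p))⁻¹) atTop
      (nhds (if ‖lam i‖ < 1 then (1 : ℂ) else 0)) := by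
    intro i
    have hpt : Tendsto (fun p : ℕ => 2 ^ p) atTop atTop :=
      tendsto_pow_atTop_atTop_of_one_lt one_lt_two
    rcases (hlam i).lt_or_gt with hlt | hgt
    · rw [if_pos hlt]
      have h0 : Tendsto (fun p : ℕ => lam i ^ (2 ^ p)) atTop (nhds 0) :=
        (tendsto_pow_atTop_nhds_zero_of_norm_lt_one (by simpa using hlt)).comp hpt
      have := ((tendsto_const_nhds.add h0).inv₀ (by norm_num) :
        Tendsto (fun p : ℕ => ((1 : ℂ) + lam i ^ (2 ^ p))⁻¹) atTop (nhds ((1 + 0)⁻¹)))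
      simpa using this
    · rw [if_neg (not_lt.mpr hgt.le)]
      rw [tendsto_zero_iff_norm_tendsto_zero]
      have hnorm : Tendsto (fun p : ℕ => ‖(1 : ℂ) + lam i ^ (2 ^ p)‖) atTop atTop := by
        apply tendsto_atTop_mono (f := fun p : ℕ => ‖lam i‖ ^ (2 ^ p) - 1)
        · intro p
          have := norm_sub_norm_le (lam i ^ (2 ^ p)) (-1 : ℂ)
          simp only [norm_neg, norm_one, sub_neg_eq_add, norm_pow] at this
          calc ‖lam i‖ ^ (2 ^ p) - 1 ≤ ‖lam i ^ (2 ^ p) + 1‖ := by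
                simpa [norm_pow] using this
            _ = ‖(1 : ℂ) + lam i ^ (2 ^ p)‖ := by rw [add_comm]
        · have : Tendsto (fun p : ℕ => ‖lam i‖ ^ (2 ^ p)) atTop atTop :=
            (tendsto_pow_atTop_atTop_of_one_lt (by simpa using hgt)).comp hpt
          simpa [sub_eq_add_neg] using this.atTop_add tendsto_const_nhds
      have := hnorm.inv_tendsto_atTop
      simpa [norm_inv, Pi.inv_def] using this
  -- assemble
  have hcont : Continuous (fun v : Fin n → ℂ => S * Matrix.diagonal v * S⁻¹) :=
    (continuous_const.matrix_mul (continuous_id.matrix_diagonal)).matrix_mul continuous_const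
  have hvec : Tendsto (fun p : ℕ => fun i => (1 + lam i ^ (2 ^ p))⁻¹) atTop
      (nhds (fun i => if ‖lam i‖ < 1 then (1 : ℂ) else 0)) :=
    tendsto_pi_nhds.mpr scal
  have := (hcont.tendsto _).comp hvec
  simp only [Function.comp_def] at this
  convert this using 2 with p
  exact hinv p
end

section
/- Let R be an m×m upper triangular matrix and X an n×m matrix. Suppose the (m+n)×m matrix A = [R; X] has the QR decomposition A = Q̂·[R̂; 0], where Q̂ is (m+n)×(m+n) unitary with blocks Q̂ = [[Q₁₁, Q₁₂], [Q₂₁, Q₂₂]] (Q₁₁ being m×m) and R̂ is m×m upper triangular. Let B be the (m+n)×(m+n) matrix [[R, 0], [X, 0]]. Then Q̂ᴴ·B·Q̂ = [[R̂·Q₁₁, R̂·Q₁₂], [0, 0]]. Moreover, if R̂ is invertible, then Q₁₁ = R·R̂⁻¹ is upper triangular, so that Q̂ᴴ·B·Q̂ is upper triangular (a Schur form of B); and if additionally Q₁₁ is invertible, then R̂ = (R̂·Q₁₁)·Q₁₁⁻¹. -/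
open Matrix

/-- Reduction of QR decomposition to Schur form: given the QR decomposition
`[R; X] = Q̂·[R̂; 0]` with `Q̂` unitary and `R`, `R̂` upper triangular, the matrix
`B = [[R, 0], [X, 0]]` satisfies `Q̂ᴴ·B·Q̂ = [[R̂·Q₁₁, R̂·Q₁₂], [0, 0]]`; moreover if
`R̂` is invertible then `Q₁₁ = R·R̂⁻¹` is upper triangular, the matrix `Q̂ᴴ·B·Q̂` is
upper triangular (a Schur form of `B`), and if additionally `Q₁₁` is invertible
then `R̂ = (R̂·Q₁₁)·Q₁₁⁻¹`. -/
theorem qr_reduces_to_schur {m n : ℕ}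
    (R : Matrix (Fin m) (Fin m) ℂ) (hR : R.BlockTriangular (id : Fin m → Fin m))
    (X : Matrix (Fin n) (Fin m) ℂ)
    (Qhat : Matrix (Fin m ⊕ Fin n) (Fin m ⊕ Fin n) ℂ) (hQ : Qhatᴴ * Qhat = 1)
    (Rhat : Matrix (Fin m) (Fin m) ℂ)
    (hRhat : Rhat.BlockTriangular (id : Fin m → Fin m))
    (hQR : Matrix.fromRows R X = Qhat * Matrix.fromRows Rhat 0) :
    Qhatᴴ * Matrix.fromBlocks R 0 X 0 * Qhat =
        Matrix.fromBlocks (Rhat * Qhat.toBlocks₁₁) (Rhat * Qhat.toBlocks₁₂) 0 0 ∧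
      (IsUnit Rhat →
        Qhat.toBlocks₁₁ = R * Rhat⁻¹ ∧
        (Qhat.toBlocks₁₁).BlockTriangular (id : Fin m → Fin m) ∧
        (Qhatᴴ * Matrix.fromBlocks R 0 X 0 * Qhat).BlockTriangular
          (Sum.elim (fun i : Fin m => (i : ℕ)) (fun j : Fin n => m + (j : ℕ))) ∧
        (IsUnit Qhat.toBlocks₁₁ →
          Rhat = (Rhat * Qhat.toBlocks₁₁) * (Qhat.toBlocks₁₁)⁻¹)) := by
  have hQblocks := Matrix.fromBlocks_toBlocks Qhat
  set Q11 := Qhat.toBlocks₁₁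
  set Q12 := Qhat.toBlocks₁₂
  set Q21 := Qhat.toBlocks₂₁
  set Q22 := Qhat.toBlocks₂₂
  -- B = fromColumns (fromRows R X) 0
  have hB : Matrix.fromBlocks R (0 : Matrix (Fin m) (Fin n) ℂ) X
      (0 : Matrix (Fin n) (Fin n) ℂ) =
      Matrix.fromCols (Matrix.fromRows R X)
        (Matrix.fromRows (0 : Matrix (Fin m) (Fin n) ℂ) (0 : Matrix (Fin n) (Fin n) ℂ)) := by
    rw [Matrix.fromCols_fromRows_eq_fromBlocks]
  have hRows0 : (Matrix.fromRows (0 : Matrix (Fin m) (Fin n) ℂ)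
      (0 : Matrix (Fin n) (Fin n) ℂ)) = 0 := by
    ext (i | i) j <;> simp
  -- compute Qᴴ B
  have hQhB : Qhatᴴ * Matrix.fromBlocks R (0 : Matrix (Fin m) (Fin n) ℂ) X
      (0 : Matrix (Fin n) (Fin n) ℂ) =
      Matrix.fromBlocks Rhat (0 : Matrix (Fin m) (Fin n) ℂ) (0 : Matrix (Fin n) (Fin m) ℂ)
        (0 : Matrix (Fin n) (Fin n) ℂ) := by
    rw [hB, Matrix.mul_fromCols, (show Matrix.fromRows R X = @HMul.hMul _ _ _
      Matrix.instHMulOfFintypeOfMulOfAddCommMonoid Qhat (Matrix.fromRows Rhat 0) from hQR),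
      ← Matrix.mul_assoc, hQ, Matrix.one_mul, hRows0,
      Matrix.mul_zero, ← Matrix.fromCols_fromRows_eq_fromBlocks, hRows0]
  -- main equation
  have hmain : Qhatᴴ * Matrix.fromBlocks R 0 X 0 * Qhat =
      Matrix.fromBlocks (Rhat * Q11) (Rhat * Q12) 0 0 := by
    rw [hQhB]
    nth_rewrite 1 [← hQblocks]
    simp [Matrix.fromBlocks_multiply]
  refine ⟨hmain, fun hRu => ?_⟩
  -- R = Q11 * Rhat
  have hReq : R = Q11 * Rhat := by
    have : Matrix.fromRows R X = @HMul.hMul _ _ _ Matrix.instHMulOfFintypeOfMulOfAddCommMonoid Qhat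
        (Matrix.fromRows Rhat 0) := hQR
    rw [← hQblocks, Matrix.fromBlocks_mul_fromRows] at this
    have := congrArg (fun M => Matrix.toRows₁ M) this
    simpa using this
  have hQ11 : Q11 = R * Rhat⁻¹ := by
    rw [hReq, Matrix.mul_assoc, Matrix.mul_nonsing_inv _ ((isUnit_iff_isUnit_det _).mp hRu),
      Matrix.mul_one]
  have hRhatInv : (Rhat⁻¹).BlockTriangular (id : Fin m → Fin m) := by
    haveI := hRu.invertible
    exact Matrix.blockTriangular_inv_of_blockTriangular hRhat
  have hQ11tri : Q11.BlockTriangular (id : Fin m → Fin m) := by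
    rw [hQ11]; exact hR.mul hRhatInv
  refine ⟨hQ11, hQ11tri, ?_, fun hQu => ?_⟩
  · rw [hmain]
    intro a b hab
    rcases a with a | a <;> rcases b with b | b
    · have hba : b < a := by
        simp only [Sum.elim_inl] at hab
        exact hab
      have := (hRhat.mul hQ11tri) (show (id b : Fin m) < id a from hba)
      simpa [Matrix.fromBlocks] using this
    · exfalso
      simp only [Sum.elim_inl, Sum.elim_inr] at hab
      omega
    · simp [Matrix.fromBlocks]
    · simp [Matrix.fromBlocks]
  · rw [Matrix.mul_assoc, Matrix.mul_nonsing_inv _ ((isUnit_iff_isUnit_det _).mp hQu),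
      Matrix.mul_one]
end

section
/- Let T be an n×n upper triangular complex matrix whose diagonal entries T₁₁, …, T_nn are pairwise distinct, and let D be the diagonal matrix with D_jj = T_jj. Then for any choice of nonzero complex numbers x₁, …, x_n, there exists a unique upper triangular matrix X with X_jj = x_j for all j and T·X = X·D, and this X is invertible. In particular, the columns of X are eigenvectors of T. -/
open Matrix Finset

namespace TrevcAux

variable {n : ℕ} (T : Matrix (Fin n) (Fin n) ℂ) (x : Fin n → ℂ)

noncomputable def ent (i j : Fin n) : ℂ :=
  if j < i then 0
  else if i = j then x j
  else (∑ k ∈ (Finset.Ioi i).attach, T i k.1 * ent k.1 j) / (T j j - T i i)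
termination_by (n - i.1)
decreasing_by
  have h1 := Finset.mem_Ioi.mp k.2
  have h2 := k.1.isLt
  omega

lemma ent_of_lt {i j : Fin n} (h : j < i) : ent T x i j = 0 := by
  rw [ent, if_pos h]

lemma ent_diag (j : Fin n) : ent T x j j = x j := by
  rw [ent, if_neg (lt_irrefl j), if_pos rfl]

lemma ent_of_gt {i j : Fin n} (h : i < j) :
    ent T x i j = (∑ k ∈ Finset.Ioi i, T i k * ent T x k j) / (T j j - T i i) := by
  rw [ent, if_neg (not_lt.mpr h.le), if_neg h.ne, Finset.sum_attach (Finset.Ioi i)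
    (fun k => T i k * ent T x k j)]

variable (hT : T.BlockTriangular (id : Fin n → Fin n))
    (hdist : ∀ i j : Fin n, i ≠ j → T i i ≠ T j j)

include hT in
lemma sum_split (Y : Matrix (Fin n) (Fin n) ℂ) (i j : Fin n) :
    ∑ k, T i k * Y k j = T i i * Y i j + ∑ k ∈ Finset.Ioi i, T i k * Y k j := by
  have h1 := Finset.sum_insert (f := fun k => T i k * Y k j)
    (show i ∉ Finset.Ioi i by simp)
  rw [Finset.Ioi_insert] at h1
  rw [← h1]
  refine (Finset.sum_subset (Finset.subset_univ _) ?_).symm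
  intro k _ hk
  have : k < i := by simpa using hk
  rw [hT this, zero_mul]

include hT hdist in
lemma key (i j : Fin n) : ∑ k, T i k * ent T x k j = ent T x i j * T j j := by
  rcases lt_trichotomy i j with h | h | h
  · have hd : T j j - T i i ≠ 0 := sub_ne_zero.mpr (hdist j i h.ne')
    refine (sum_split T hT (ent T x) i j).trans ?_
    rw [ent_of_gt T x h]
    field_simp
    ring
  · subst h
    refine (sum_split T hT (ent T x) i i).trans ?_
    rw [ent_diag]
    have h0 : ∑ k ∈ Finset.Ioi i, T i k * ent T x k i = 0 := by
      refine Finset.sum_eq_zero fun k hk => ?_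
      rw [ent_of_lt T x (Finset.mem_Ioi.mp hk), mul_zero]
    rw [h0, add_zero]; ring
  · refine (sum_split T hT (ent T x) i j).trans ?_
    rw [ent_of_lt T x h, mul_zero, zero_mul, zero_add]
    refine Finset.sum_eq_zero fun k hk => ?_
    rw [ent_of_lt T x (h.trans (Finset.mem_Ioi.mp hk)), mul_zero]

include hT hdist in
lemma uniq (Y : Matrix (Fin n) (Fin n) ℂ)
    (hYt : Y.BlockTriangular (id : Fin n → Fin n)) (hYd : ∀ j, Y j j = x j)
    (hYe : T * Y = Y * Matrix.diagonal (fun j => T j j)) (i j : Fin n) :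
    Y i j = ent T x i j := by
  rcases lt_trichotomy i j with h | h | h
  · have hd : T j j - T i i ≠ 0 := sub_ne_zero.mpr (hdist j i h.ne')
    have he : ∑ k, T i k * Y k j = Y i j * T j j := by
      have := congrFun (congrFun hYe i) j
      rwa [Matrix.mul_apply, Matrix.mul_diagonal] at this
    rw [sum_split T hT] at he
    have hsum : ∑ k ∈ Finset.Ioi i, T i k * Y k j
        = ∑ k ∈ Finset.Ioi i, T i k * ent T x k j := by
      refine Finset.sum_congr rfl fun k hk => ?_
      rw [uniq Y hYt hYd hYe k j]
    rw [hsum] at he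
    rw [ent_of_gt T x h, eq_div_iff hd]
    linear_combination -he
  · rw [h, hYd, ent_diag]
  · rw [hYt (show (id j : Fin n) < id i from h), ent_of_lt T x h]
termination_by (n - i.1)
decreasing_by
  have h1 := Finset.mem_Ioi.mp hk
  have h2 := k.isLt
  omega

end TrevcAux

open TrevcAux in
/-- For an upper triangular matrix `T` with pairwise distinct diagonal entries and
any prescribed nonzero diagonal values `x₁, …, x_n`, there is a unique upper
triangular matrix `X` with `X_jj = x_j` and `T·X = X·D` (where `D = diag(T)`),
this `X` is invertible, and its columns are eigenvectors of `T`. -/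
theorem triangular_eigenvector_matrix {n : ℕ}
    (T : Matrix (Fin n) (Fin n) ℂ)
    (hT : T.BlockTriangular (id : Fin n → Fin n))
    (hdist : ∀ i j : Fin n, i ≠ j → T i i ≠ T j j)
    (x : Fin n → ℂ) (hx : ∀ j, x j ≠ 0) :
    ∃ X : Matrix (Fin n) (Fin n) ℂ,
      (X.BlockTriangular (id : Fin n → Fin n) ∧ (∀ j, X j j = x j) ∧
        T * X = X * Matrix.diagonal (fun j => T j j)) ∧
      IsUnit X ∧
      (∀ j, T.mulVec (fun i => X i j) = T j j • fun i => X i j) ∧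
      ∀ Y : Matrix (Fin n) (Fin n) ℂ,
        (Y.BlockTriangular (id : Fin n → Fin n) ∧ (∀ j, Y j j = x j) ∧
          T * Y = Y * Matrix.diagonal (fun j => T j j)) → Y = X := by
  set X : Matrix (Fin n) (Fin n) ℂ := fun i j => ent T x i j with hX
  have hXt : X.BlockTriangular (id : Fin n → Fin n) := fun i j hij =>
    ent_of_lt T x hij
  have hXd : ∀ j, X j j = x j := fun j => ent_diag T x j
  have hXe : T * X = X * Matrix.diagonal (fun j => T j j) := by
    ext i j
    rw [Matrix.mul_apply, Matrix.mul_diagonal]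
    exact key T x hT hdist i j
  refine ⟨X, ⟨hXt, hXd, hXe⟩, ?_, ?_, ?_⟩
  · rw [Matrix.isUnit_iff_isUnit_det, isUnit_iff_ne_zero,
      Matrix.det_of_upperTriangular hXt]
    exact Finset.prod_ne_zero_iff.mpr fun j _ => by rw [hXd]; exact hx j
  · intro j
    funext i
    have := congrFun (congrFun hXe i) j
    rw [Matrix.mul_apply, Matrix.mul_diagonal] at this
    simpa [Matrix.mulVec, dotProduct, mul_comm] using this
  · rintro Y ⟨hYt, hYd, hYe⟩
    ext i j
    exact uniq T x hT hdist Y hYt hYd hYe i j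
end

section
/- Let M be an n×n complex matrix with M = U·R, where U is unitary and R is block upper triangular: R = [[R₁₁, R₁₂], [0, R₂₂]] with R₁₁ of size r×r and invertible. Write M = [Y₁, Y₂] where Y₁ consists of the first r columns of M. Then Y₁ᴴ·Y₁ is invertible and R₁₁⁻¹·R₁₂ = (Y₁ᴴ·Y₁)⁻¹·Y₁ᴴ·Y₂, i.e., R₁₁⁻¹R₁₂ equals the pseudoinverse of Y₁ applied to Y₂. -/
open Matrix

/-- If `M = U·R` with `U` unitary and `R` block upper triangular with invertible
leading `r×r` block `R₁₁`, and `Y₁`, `Y₂` are the first `r` and the remaining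
columns of `M`, then `Y₁ᴴ·Y₁` is invertible and
`R₁₁⁻¹·R₁₂ = (Y₁ᴴ·Y₁)⁻¹·Y₁ᴴ·Y₂`. -/
theorem r11_inv_r12_eq_pseudoinverse {r s : ℕ}
    (M U : Matrix (Fin r ⊕ Fin s) (Fin r ⊕ Fin s) ℂ)
    (R₁₁ : Matrix (Fin r) (Fin r) ℂ) (R₁₂ : Matrix (Fin r) (Fin s) ℂ)
    (R₂₂ : Matrix (Fin s) (Fin s) ℂ)
    (hU : Uᴴ * U = 1) (hR11 : IsUnit R₁₁)
    (hM : M = U * Matrix.fromBlocks R₁₁ R₁₂ 0 R₂₂) :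
    IsUnit ((M.toCols₁)ᴴ * M.toCols₁) ∧
      R₁₁⁻¹ * R₁₂ =
        ((M.toCols₁)ᴴ * M.toCols₁)⁻¹ * (M.toCols₁)ᴴ * M.toCols₂ := by
  have hY₁ : M.toCols₁ = U * fromRows R₁₁ (0 : Matrix (Fin s) (Fin r) ℂ) := by
    rw [hM, ← fromCols_fromRows_eq_fromBlocks, mul_fromCols, toCols₁_fromCols]
  have hY₂ : M.toCols₂ = U * fromRows R₁₂ R₂₂ := by
    rw [hM, ← fromCols_fromRows_eq_fromBlocks, mul_fromCols, toCols₂_fromCols]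
  have h11 : (M.toCols₁)ᴴ * M.toCols₁ = R₁₁ᴴ * R₁₁ := by
    rw [hY₁, conjTranspose_mul, Matrix.mul_assoc, ← Matrix.mul_assoc Uᴴ, hU,
      Matrix.one_mul, conjTranspose_fromRows_eq_fromCols_conjTranspose,
      fromCols_mul_fromRows]
    simp
  have h12 : (M.toCols₁)ᴴ * M.toCols₂ = R₁₁ᴴ * R₁₂ := by
    rw [hY₁, hY₂, conjTranspose_mul, Matrix.mul_assoc, ← Matrix.mul_assoc Uᴴ, hU,
      Matrix.one_mul, conjTranspose_fromRows_eq_fromCols_conjTranspose,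
      fromCols_mul_fromRows]
    simp
  have hR11H : IsUnit R₁₁ᴴ := (isUnit_conjTranspose R₁₁).mpr hR11
  refine ⟨h11 ▸ hR11H.mul hR11, ?_⟩
  rw [Matrix.mul_assoc, h11, h12, Matrix.mul_inv_rev, Matrix.mul_assoc,
    ← Matrix.mul_assoc R₁₁ᴴ⁻¹, Matrix.nonsing_inv_mul _ ((isUnit_iff_isUnit_det _).mp hR11H),
    Matrix.one_mul]
end

section
/- Let A be an invertible n×n complex matrix with singular value decomposition A = P·Σ·Qᴴ, where P and Q are unitary and Σ = diag(Σ₁, Σ₂) is block diagonal with Σ₁ of size r×r. Suppose A = U·R·V, where U and V are unitary and R = [[R₁₁, R₁₂], [0, R₂₂]] is block upper triangular with R₁₁ of size r×r and invertible. Let X = Qᴴ·Vᴴ, partitioned into blocks X₁₁ (r×r), X₁₂ (r×(n−r)), X₂₁ ((n−r)×r), X₂₂ ((n−r)×(n−r)). If X₁₁ᴴ·Σ₁²·X₁₁ + X₂₁ᴴ·Σ₂²·X₂₁ is invertible, then R₁₁⁻¹·R₁₂ = (X₁₁ᴴ·Σ₁²·X₁₁ + X₂₁ᴴ·Σ₂²·X₂₁)⁻¹·(X₁₁ᴴ·Σ₁²·X₁₂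 + X₂₁ᴴ·Σ₂²·X₂₂). -/
open Matrix

set_option maxHeartbeats 1000000 in
/-- Key identity in the proof that RURV is a strong rank-revealing factorization:
with `A = P·Σ·Qᴴ` an SVD (`Σ = diag(Σ₁, Σ₂)`), `A = U·R·V` with `U`, `V` unitary
and `R` block upper triangular with invertible `R₁₁`, and `X = Qᴴ·Vᴴ`, if
`X₁₁ᴴ·Σ₁²·X₁₁ + X₂₁ᴴ·Σ₂²·X₂₁` is invertible then
`R₁₁⁻¹·R₁₂ = (X₁₁ᴴ·Σ₁²·X₁₁ + X₂₁ᴴ·Σ₂²·X₂₁)⁻¹·(X₁₁ᴴ·Σ₁²·X₁₂ + X₂₁ᴴ·Σ₂²·X₂₂)`. -/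
theorem rurv_strong_rrqr_identity {r s : ℕ}
    (A P Q U V : Matrix (Fin r ⊕ Fin s) (Fin r ⊕ Fin s) ℂ)
    (σ₁ : Fin r → ℝ) (σ₂ : Fin s → ℝ)
    (hσ₁ : ∀ i, 0 ≤ σ₁ i) (hσ₂ : ∀ i, 0 ≤ σ₂ i)
    (R₁₁ : Matrix (Fin r) (Fin r) ℂ) (R₁₂ : Matrix (Fin r) (Fin s) ℂ)
    (R₂₂ : Matrix (Fin s) (Fin s) ℂ)
    (hA : IsUnit A)
    (hP : Pᴴ * P = 1) (hQ : Qᴴ * Q = 1) (hU : Uᴴ * U = 1) (hV : Vᴴ * V = 1)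
    (hSVD : A = P * Matrix.fromBlocks (Matrix.diagonal fun i => (σ₁ i : ℂ)) 0 0
        (Matrix.diagonal fun i => (σ₂ i : ℂ)) * Qᴴ)
    (hR11 : IsUnit R₁₁)
    (hURV : A = U * Matrix.fromBlocks R₁₁ R₁₂ 0 R₂₂ * V) :
    let Sig₁ : Matrix (Fin r) (Fin r) ℂ := Matrix.diagonal fun i => (σ₁ i : ℂ)
    let Sig₂ : Matrix (Fin s) (Fin s) ℂ := Matrix.diagonal fun i => (σ₂ i : ℂ)
    let X := Qᴴ * Vᴴ
    IsUnit ((X.toBlocks₁₁)ᴴ * Sig₁ ^ 2 * X.toBlocks₁₁ +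
        (X.toBlocks₂₁)ᴴ * Sig₂ ^ 2 * X.toBlocks₂₁) →
      R₁₁⁻¹ * R₁₂ =
        ((X.toBlocks₁₁)ᴴ * Sig₁ ^ 2 * X.toBlocks₁₁ +
            (X.toBlocks₂₁)ᴴ * Sig₂ ^ 2 * X.toBlocks₂₁)⁻¹ *
          ((X.toBlocks₁₁)ᴴ * Sig₁ ^ 2 * X.toBlocks₁₂ +
            (X.toBlocks₂₁)ᴴ * Sig₂ ^ 2 * X.toBlocks₂₂) := by
  intro Sig₁ Sig₂ X hM
  set R : Matrix (Fin r ⊕ Fin s) (Fin r ⊕ Fin s) ℂ := Matrix.fromBlocks R₁₁ R₁₂ 0 R₂₂ with hRdef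
  set Sg : Matrix (Fin r ⊕ Fin s) (Fin r ⊕ Fin s) ℂ := Matrix.fromBlocks Sig₁ 0 0 Sig₂ with hSgdef
  have hVV' : V * Vᴴ = 1 := (mul_eq_one_comm).mp hV
  have hSgH : Sgᴴ = Sg := by
    simp [hSgdef, Sig₁, Sig₂, Matrix.fromBlocks_conjTranspose, Matrix.diagonal_conjTranspose,
      Function.comp]
  have hAA1 : Aᴴ * A = Vᴴ * (Rᴴ * R) * V := by
    rw [hURV]
    simp only [Matrix.conjTranspose_mul, Matrix.mul_assoc]
    rw [← Matrix.mul_assoc Uᴴ U, hU, Matrix.one_mul]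
  have hAA2 : Aᴴ * A = Q * (Sg * Sg) * Qᴴ := by
    rw [hSVD]
    simp only [Matrix.conjTranspose_mul, Matrix.conjTranspose_conjTranspose, hSgH,
      Matrix.mul_assoc]
    rw [← Matrix.mul_assoc Pᴴ P, hP, Matrix.one_mul]
  have hkey : Vᴴ * (Rᴴ * R) * V = Q * (Sg * Sg) * Qᴴ := hAA1 ▸ hAA2
  have hRR : Rᴴ * R = Xᴴ * (Sg * Sg) * X := by
    calc Rᴴ * R = 1 * (Rᴴ * R) * 1 := by rw [Matrix.one_mul, Matrix.mul_one]
      _ = (V * Vᴴ) * (Rᴴ * R) * (V * Vᴴ) := by rw [hVV']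
      _ = V * (Vᴴ * (Rᴴ * R) * V) * Vᴴ := by simp only [Matrix.mul_assoc]
      _ = V * (Q * (Sg * Sg) * Qᴴ) * Vᴴ := by rw [hkey]
      _ = Xᴴ * (Sg * Sg) * X := by
          simp only [X, Matrix.conjTranspose_mul, Matrix.conjTranspose_conjTranspose,
            Matrix.mul_assoc]
  have hXb : X = Matrix.fromBlocks X.toBlocks₁₁ X.toBlocks₁₂ X.toBlocks₂₁ X.toBlocks₂₂ :=
    (Matrix.fromBlocks_toBlocks X).symm
  rw [hXb, hRdef, hSgdef] at hRR
  simp only [Matrix.fromBlocks_conjTranspose, Matrix.fromBlocks_multiply,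
    Matrix.conjTranspose_zero, Matrix.zero_mul, Matrix.mul_zero, add_zero, zero_add,
    Matrix.mul_one, Matrix.one_mul] at hRR
  have h11 : R₁₁ᴴ * R₁₁ =
      (X.toBlocks₁₁)ᴴ * Sig₁ ^ 2 * X.toBlocks₁₁ + (X.toBlocks₂₁)ᴴ * Sig₂ ^ 2 * X.toBlocks₂₁ := by
    have := congrArg Matrix.toBlocks₁₁ hRR
    simpa [Matrix.toBlocks_fromBlocks₁₁, sq, Matrix.mul_assoc] using this
  have h12 : R₁₁ᴴ * R₁₂ =
      (X.toBlocks₁₁)ᴴ * Sig₁ ^ 2 * X.toBlocks₁₂ + (X.toBlocks₂₁)ᴴ * Sig₂ ^ 2 * X.toBlocks₂₂ := by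
    have := congrArg Matrix.toBlocks₁₂ hRR
    simpa [Matrix.toBlocks_fromBlocks₁₂, sq, Matrix.mul_assoc] using this
  rw [← h11, ← h12]
  have hdet : IsUnit R₁₁.det := (Matrix.isUnit_iff_isUnit_det R₁₁).mp hR11
  have hdetH : IsUnit (R₁₁ᴴ).det := by
    rw [Matrix.det_conjTranspose]; exact hdet.star
  rw [Matrix.mul_inv_rev, Matrix.mul_assoc, ← Matrix.mul_assoc (R₁₁ᴴ)⁻¹,
    Matrix.nonsing_inv_mul _ hdetH, Matrix.one_mul]
end

section
/- Let X₁₁ be an invertible r×r complex matrix, X₁₂ an r×(n−r) matrix, X₂₁ an (n−r)×r matrix, and Σ₁, Σ₂ square matrices of sizes r×r and (n−r)×(n−r). Let W = X₂₁·X₁₁⁻¹. If X₁₁ᴴ·Σ₁²·X₁₁ + X₂₁ᴴ·Σ₂²·X₂₁ is invertible, then Σ₁² + Wᴴ·Σ₂²·W is invertible and (X₁₁ᴴ·Σ₁²·X₁₁ + X₂₁ᴴ·Σ₂²·X₂₁)⁻¹·X₁₁ᴴ·Σ₁²·X₁₂ = X₁₁⁻¹·(Σ₁² + Wᴴ·Σ₂²·W)⁻¹·Σ₁²·X₁₂.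 -/
open Matrix

/-- Algebraic identity for the term `T₁` in the proof of the strong rank-revealing
property of RURV: with `W = X₂₁·X₁₁⁻¹` and `X₁₁ᴴ·Σ₁²·X₁₁ + X₂₁ᴴ·Σ₂²·X₂₁`
invertible, the matrix `Σ₁² + Wᴴ·Σ₂²·W` is invertible and
`(X₁₁ᴴ·Σ₁²·X₁₁ + X₂₁ᴴ·Σ₂²·X₂₁)⁻¹·X₁₁ᴴ·Σ₁²·X₁₂ = X₁₁⁻¹·(Σ₁² + Wᴴ·Σ₂²·W)⁻¹·Σ₁²·X₁₂`. -/
theorem t1_identity {r s : ℕ}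
    (X₁₁ : Matrix (Fin r) (Fin r) ℂ) (hX11 : IsUnit X₁₁)
    (X₁₂ : Matrix (Fin r) (Fin s) ℂ) (X₂₁ : Matrix (Fin s) (Fin r) ℂ)
    (Sig₁ : Matrix (Fin r) (Fin r) ℂ) (Sig₂ : Matrix (Fin s) (Fin s) ℂ)
    (hsum : IsUnit (X₁₁ᴴ * Sig₁ ^ 2 * X₁₁ + X₂₁ᴴ * Sig₂ ^ 2 * X₂₁)) :
    let W := X₂₁ * X₁₁⁻¹
    IsUnit (Sig₁ ^ 2 + Wᴴ * Sig₂ ^ 2 * W) ∧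
      (X₁₁ᴴ * Sig₁ ^ 2 * X₁₁ + X₂₁ᴴ * Sig₂ ^ 2 * X₂₁)⁻¹ * X₁₁ᴴ * Sig₁ ^ 2 * X₁₂ =
        X₁₁⁻¹ * (Sig₁ ^ 2 + Wᴴ * Sig₂ ^ 2 * W)⁻¹ * Sig₁ ^ 2 * X₁₂ := by
  intro W
  have hdet : IsUnit X₁₁.det := (Matrix.isUnit_iff_isUnit_det X₁₁).mp hX11
  have hWX : W * X₁₁ = X₂₁ := by
    show X₂₁ * X₁₁⁻¹ * X₁₁ = X₂₁
    rw [Matrix.mul_assoc, Matrix.nonsing_inv_mul X₁₁ hdet, Matrix.mul_one]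
  set M := Sig₁ ^ 2 + Wᴴ * Sig₂ ^ 2 * W with hM
  have key : X₁₁ᴴ * M * X₁₁ = X₁₁ᴴ * Sig₁ ^ 2 * X₁₁ + X₂₁ᴴ * Sig₂ ^ 2 * X₂₁ := by
    have h2 : X₂₁ᴴ = X₁₁ᴴ * Wᴴ := by rw [← conjTranspose_mul, hWX]
    rw [hM, h2]
    simp only [Matrix.mul_add, Matrix.add_mul, Matrix.mul_assoc, hWX]
  have hsum' : IsUnit (X₁₁ᴴ * M * X₁₁) := key ▸ hsum
  have hMunit : IsUnit M := by
    rw [Matrix.isUnit_iff_isUnit_det, isUnit_iff_ne_zero]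
    have h := (Matrix.isUnit_iff_isUnit_det _).mp hsum'
    rw [Matrix.det_mul, Matrix.det_mul, isUnit_iff_ne_zero] at h
    intro hz
    apply h
    rw [hz, mul_zero, zero_mul]
  refine ⟨hMunit, ?_⟩
  have hdetH : IsUnit X₁₁ᴴ.det := by
    rw [Matrix.det_conjTranspose]; exact hdet.star
  have hinv : (X₁₁ᴴ * M * X₁₁)⁻¹ = X₁₁⁻¹ * M⁻¹ * X₁₁ᴴ⁻¹ := by
    rw [Matrix.mul_inv_rev, Matrix.mul_inv_rev, Matrix.mul_assoc]
  rw [← key, hinv]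
  have h1 : X₁₁ᴴ⁻¹ * X₁₁ᴴ = 1 := Matrix.nonsing_inv_mul _ hdetH
  simp only [Matrix.mul_assoc]
  rw [← Matrix.mul_assoc X₁₁ᴴ⁻¹ X₁₁ᴴ, h1, Matrix.one_mul]
end
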